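/- Let (𝔡, ⟨·,·⟩) be a quadratic Lie algebra with Cartan 3-form χ(x,y,z) = ⟨[x,y],z⟩, and let k: 𝔡 × 𝔡 × 𝔡 → ℝ be a trilinear form satisfying (i) k(x,y,z) = −k(x,z,y) for all x,y,z, and (ii) k(x,y,z) + k(y,z,x) + k(z,x,y) = −χ(x,y,z) for all x,y,z. Then for any basis (t_μ) of 𝔡 with ⟨·,·⟩-dual basis (t^μ): ½ ∑_{λ,μ,ν} k(t_λ,t_μ,t_ν) · ( k(t^λ,t^μ,t^ν) − 2 k(t^μ,t^λ,t^ν) ) = (1/6) ∑_{λ,μ,ν} χ(t_λ,t_μ,t_ν) · χ(t^λ,t^μ,t^ν). (In the paper this says that the canonical generalized scalar curvature of any torsion-free metric connection on the Courant algebroid 𝔡 over a point equals ⟨χ,χ⟩_𝔡.) -/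

import Mathlib

lemma sum3_eq_sum_prod {ι : Type*} [Fintype ι] (g : ι → ι → ι → ℝ) :
    ∑ l : ι, ∑ m : ι, ∑ n : ι, g l m n = ∑ p : ι × ι × ι, g p.1 p.2.1 p.2.2 := by
  rw [Fintype.sum_prod_type]
  exact Finset.sum_congr rfl fun l _ =>
    (Fintype.sum_prod_type (f := fun p : ι × ι => g l p.1 p.2)).symm

lemma rot3 {ι : Type*} [Fintype ι] (g : ι → ι → ι → ℝ) :
    ∑ l : ι, ∑ m : ι, ∑ n : ι, g l m n = ∑ l : ι, ∑ m : ι, ∑ n : ι, g m n l := by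
  rw [sum3_eq_sum_prod, sum3_eq_sum_prod]
  exact Fintype.sum_equiv ⟨fun p => (p.2.2, p.1, p.2.1), fun p => (p.2.1, p.2.2, p.1),
    fun p => rfl, fun p => rfl⟩ _ _ (fun p => rfl)

lemma rot3' {ι : Type*} [Fintype ι] (g : ι → ι → ι → ℝ) :
    ∑ l : ι, ∑ m : ι, ∑ n : ι, g l m n = ∑ l : ι, ∑ m : ι, ∑ n : ι, g n l m :=
  (rot3 g).trans (rot3 fun a b c => g b c a)

lemma swap23 {ι : Type*} [Fintype ι] (g : ι → ι → ι → ℝ) :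
    ∑ l : ι, ∑ m : ι, ∑ n : ι, g l m n = ∑ l : ι, ∑ m : ι, ∑ n : ι, g l n m :=
  Finset.sum_congr rfl fun l _ => Finset.sum_comm

/-- **Canonical generalized scalar curvature over a point.**
Let `(𝔡, B)` be a quadratic Lie algebra with Cartan 3-form `χ(x,y,z) = B ⁅x,y⁆ z`,
and let `k` be a trilinear form with (i) `k x y z = −k x z y` and
(ii) `k x y z + k y z x + k z x y = −χ x y z` (a torsion-free metric connection).
Then for any `B`-dual pair of bases `(b, c)`:
`½ ∑ k(b_λ,b_μ,b_ν)(k(c_λ,c_μ,c_ν) − 2 k(c_μ,c_λ,c_ν)) = ⅙ ∑ χ(b_λ,b_μ,b_ν) χ(c_λ,c_μ,c_ν)`. -/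
theorem stmt10 (D : Type*) [LieRing D] [LieAlgebra ℝ D] [FiniteDimensional ℝ D]
    (B : LinearMap.BilinForm ℝ D) (hnd : B.Nondegenerate) (hsymm : B.IsSymm)
    (hinvar : ∀ x y z : D, B ⁅x, y⁆ z = B x ⁅y, z⁆)
    (k : D →ₗ[ℝ] D →ₗ[ℝ] D →ₗ[ℝ] ℝ)
    (hskew : ∀ x y z : D, k x y z = - k x z y)
    (htor : ∀ x y z : D, k x y z + k y z x + k z x y = - B ⁅x, y⁆ z)
    (ι : Type*) [Fintype ι] [DecidableEq ι] (b : Module.Basis ι ℝ D) (c : ι → D)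
    (hdual : ∀ μ ν : ι, B (c μ) (b ν) = if μ = ν then 1 else 0) :
    (1 / 2 : ℝ) * ∑ l : ι, ∑ m : ι, ∑ n : ι,
        k (b l) (b m) (b n) * (k (c l) (c m) (c n) - 2 * k (c m) (c l) (c n)) =
      (1 / 6 : ℝ) * ∑ l : ι, ∑ m : ι, ∑ n : ι,
        B ⁅b l, b m⁆ (b n) * B ⁅c l, c m⁆ (c n) := by
  have hχ : ∀ x y z : D, B ⁅x, y⁆ z = -(k x y z + k y z x + k z x y) := fun x y z => by
    linarith [htor x y z]
  -- LHS sum = A + 2 F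
  have h1 : (∑ l : ι, ∑ m : ι, ∑ n : ι,
        k (b l) (b m) (b n) * (k (c l) (c m) (c n) - 2 * k (c m) (c l) (c n)))
      = (∑ l : ι, ∑ m : ι, ∑ n : ι, k (b l) (b m) (b n) * k (c l) (c m) (c n))
        + 2 * ∑ l : ι, ∑ m : ι, ∑ n : ι, k (b l) (b m) (b n) * k (c m) (c n) (c l) := by
    have e : ∀ l m n : ι,
        k (b l) (b m) (b n) * (k (c l) (c m) (c n) - 2 * k (c m) (c l) (c n))
        = k (b l) (b m) (b n) * k (c l) (c m) (c n)
          + 2 * (k (b l) (b m) (b n) * k (c m) (c n) (c l)) := fun l m n => by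
      rw [hskew (c m) (c l) (c n)]; ring
    simp only [e, Finset.sum_add_distrib, ← Finset.mul_sum]
  -- RHS sum = 3A + 3F + 3G
  have t21 : (∑ l : ι, ∑ m : ι, ∑ n : ι, k (b m) (b n) (b l) * k (c l) (c m) (c n))
      = ∑ l : ι, ∑ m : ι, ∑ n : ι, k (b l) (b m) (b n) * k (c n) (c l) (c m) :=
    (rot3 fun l m n => k (b l) (b m) (b n) * k (c n) (c l) (c m)).symm
  have t22 : (∑ l : ι, ∑ m : ι, ∑ n : ι, k (b m) (b n) (b l) * k (c m) (c n) (c l))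
      = ∑ l : ι, ∑ m : ι, ∑ n : ι, k (b l) (b m) (b n) * k (c l) (c m) (c n) :=
    (rot3 fun l m n => k (b l) (b m) (b n) * k (c l) (c m) (c n)).symm
  have t23 : (∑ l : ι, ∑ m : ι, ∑ n : ι, k (b m) (b n) (b l) * k (c n) (c l) (c m))
      = ∑ l : ι, ∑ m : ι, ∑ n : ι, k (b l) (b m) (b n) * k (c m) (c n) (c l) :=
    (rot3 fun l m n => k (b l) (b m) (b n) * k (c m) (c n) (c l)).symm
  have t31 : (∑ l : ι, ∑ m : ι, ∑ n : ι, k (b n) (b l) (b m) * k (c l) (c m) (c n))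
      = ∑ l : ι, ∑ m : ι, ∑ n : ι, k (b l) (b m) (b n) * k (c m) (c n) (c l) :=
    (rot3' fun l m n => k (b l) (b m) (b n) * k (c m) (c n) (c l)).symm
  have t32 : (∑ l : ι, ∑ m : ι, ∑ n : ι, k (b n) (b l) (b m) * k (c m) (c n) (c l))
      = ∑ l : ι, ∑ m : ι, ∑ n : ι, k (b l) (b m) (b n) * k (c n) (c l) (c m) :=
    (rot3' fun l m n => k (b l) (b m) (b n) * k (c n) (c l) (c m)).symm
  have t33 : (∑ l : ι, ∑ m : ι, ∑ n : ι, k (b n) (b l) (b m) * k (c n) (c l) (c m))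
      = ∑ l : ι, ∑ m : ι, ∑ n : ι, k (b l) (b m) (b n) * k (c l) (c m) (c n) :=
    (rot3' fun l m n => k (b l) (b m) (b n) * k (c l) (c m) (c n)).symm
  have h2 : (∑ l : ι, ∑ m : ι, ∑ n : ι, B ⁅b l, b m⁆ (b n) * B ⁅c l, c m⁆ (c n))
      = 3 * (∑ l : ι, ∑ m : ι, ∑ n : ι, k (b l) (b m) (b n) * k (c l) (c m) (c n))
        + 3 * (∑ l : ι, ∑ m : ι, ∑ n : ι, k (b l) (b m) (b n) * k (c m) (c n) (c l))
        + 3 * (∑ l : ι, ∑ m : ι, ∑ n : ι, k (b l) (b m) (b n) * k (c n) (c l) (c m)) := by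
    have e2 : ∀ l m n : ι, B ⁅b l, b m⁆ (b n) * B ⁅c l, c m⁆ (c n)
        = k (b l) (b m) (b n) * k (c l) (c m) (c n)
          + k (b l) (b m) (b n) * k (c m) (c n) (c l)
          + k (b l) (b m) (b n) * k (c n) (c l) (c m)
          + k (b m) (b n) (b l) * k (c l) (c m) (c n)
          + k (b m) (b n) (b l) * k (c m) (c n) (c l)
          + k (b m) (b n) (b l) * k (c n) (c l) (c m)
          + k (b n) (b l) (b m) * k (c l) (c m) (c n)
          + k (b n) (b l) (b m) * k (c m) (c n) (c l)
          + k (b n) (b l) (b m) * k (c n) (c l) (c m) := fun l m n => by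
      rw [hχ (b l) (b m) (b n), hχ (c l) (c m) (c n)]; ring
    simp only [e2, Finset.sum_add_distrib]
    rw [t21, t22, t23, t31, t32, t33]
    ring
  -- F = G
  have hFG : (∑ l : ι, ∑ m : ι, ∑ n : ι, k (b l) (b m) (b n) * k (c n) (c l) (c m))
      = ∑ l : ι, ∑ m : ι, ∑ n : ι, k (b l) (b m) (b n) * k (c m) (c n) (c l) := by
    have e3 : ∀ l m n : ι, k (b l) (b m) (b n) * k (c n) (c l) (c m)
        = k (b l) (b n) (b m) * k (c n) (c m) (c l) := fun l m n => by
      rw [hskew (b l) (b m) (b n), hskew (c n) (c l) (c m)]; ring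
    calc (∑ l : ι, ∑ m : ι, ∑ n : ι, k (b l) (b m) (b n) * k (c n) (c l) (c m))
        = ∑ l : ι, ∑ m : ι, ∑ n : ι, k (b l) (b n) (b m) * k (c n) (c m) (c l) :=
          Finset.sum_congr rfl fun l _ => Finset.sum_congr rfl fun m _ =>
            Finset.sum_congr rfl fun n _ => e3 l m n
      _ = ∑ l : ι, ∑ m : ι, ∑ n : ι, k (b l) (b m) (b n) * k (c m) (c n) (c l) :=
          (swap23 fun l m n => k (b l) (b m) (b n) * k (c m) (c n) (c l)).symm
  rw [h1, h2, hFG]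
  ring
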